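/- Fubini-type identity: for a nonnegative measurable function ν on (0,a), ∫₀^a (∫₀^a ν(t)/(sqrt(t)(t + x)) dt)² x dx < ∞ if and only if ∫₀^a ∫₀^a ν(t)ν(τ)·|log(t + τ)|/sqrt(tτ) dt dτ < ∞. -/

import Mathlib

open MeasureTheory ENNReal Set

lemma eval_inv_integral (s b c : ℝ) (hs : 0 < s) (hb : 0 ≤ b) (hbc : b ≤ c) :
    ∫⁻ x in Ioo b c, ENNReal.ofReal ((s + x)⁻¹) =
      ENNReal.ofReal (Real.log (s + c) - Real.log (s + b)) := by
  have hIoo : (Ioo b c : Set ℝ) =ᵐ[volume] Ioc b c := Ioo_ae_eq_Ioc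
  rw [setLIntegral_congr hIoo]
  have hcont : ContinuousOn (fun x : ℝ => (s + x)⁻¹) (Icc b c) := by
    apply ContinuousOn.inv₀
    · fun_prop
    · intro x hx
      have : 0 < s + x := by nlinarith [hx.1]
      exact this.ne'
  have hint : IntegrableOn (fun x : ℝ => (s + x)⁻¹) (Ioc b c) volume :=
    (hcont.integrableOn_Icc).mono_set Ioc_subset_Icc_self
  rw [← ofReal_integral_eq_lintegral_ofReal hint]
  · congr 1
    rw [← intervalIntegral.integral_of_le hbc]
    have h1 : ∫ x in b..c, (s + x)⁻¹ = ∫ u in s + b..s + c, u⁻¹ := by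
      simpa using intervalIntegral.integral_comp_add_left (fun u => u⁻¹) s
    rw [h1]
    have h0 : (0:ℝ) ∉ uIcc (s + b) (s + c) := by
      rw [uIcc_of_le (by linarith)]
      intro h
      have := h.1
      linarith
    have := integral_one_div h0
    simp only [one_div] at this
    rw [this, Real.log_div (by linarith : (0:ℝ) < s + c).ne' (by linarith : (0:ℝ) < s + b).ne']
  · filter_upwards [ae_restrict_mem measurableSet_Ioc] with x hx
    have : 0 < s + x := by nlinarith [hx.1]
    positivity

lemma kernel_upper (a : ℝ) (ha : 0 < a) (t τ : ℝ) (ht : t ∈ Ioo 0 a) (hτ : τ ∈ Ioo 0 a) :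
    ∫⁻ x in Ioo 0 a, ENNReal.ofReal (x / ((t+x)*(τ+x))) ≤
      ENNReal.ofReal (Real.log (t+τ+a) - Real.log (t+τ)) := by
  have hmeas : Measurable fun x : ℝ => ENNReal.ofReal ((t+τ+x)⁻¹) := by fun_prop
  calc ∫⁻ x in Ioo 0 a, ENNReal.ofReal (x / ((t+x)*(τ+x)))
      ≤ ∫⁻ x in Ioo 0 a, ENNReal.ofReal ((t+τ+x)⁻¹) := by
        apply setLIntegral_mono hmeas
        intro x hx
        apply ENNReal.ofReal_le_ofReal
        rw [inv_eq_one_div, div_le_div_iff₀ (by nlinarith [hx.1, ht.1, hτ.1]) (by nlinarith [hx.1, ht.1, hτ.1])]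
        nlinarith [hx.1, ht.1, hτ.1, mul_pos ht.1 hτ.1]
    _ = ENNReal.ofReal (Real.log (t+τ+a) - Real.log (t+τ)) := by
        have := eval_inv_integral (t+τ) 0 a (by nlinarith [ht.1, hτ.1]) le_rfl ha.le
        simpa using this

lemma kernel_lower_const (a : ℝ) (ha : 0 < a) (t τ : ℝ) (ht : t ∈ Ioo 0 a) (hτ : τ ∈ Ioo 0 a) :
    ENNReal.ofReal (1/16) ≤ ∫⁻ x in Ioo 0 a, ENNReal.ofReal (x / ((t+x)*(τ+x))) := by
  have h1 : ENNReal.ofReal (1/16) = ENNReal.ofReal (1/(8*a)) * volume (Ioo (a/2) a) := by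
    rw [Real.volume_Ioo, ← ENNReal.ofReal_mul (by positivity)]
    congr 1
    field_simp
    ring
  rw [h1, ← setLIntegral_const]
  calc ∫⁻ _ in Ioo (a/2) a, ENNReal.ofReal (1/(8*a))
      ≤ ∫⁻ x in Ioo (a/2) a, ENNReal.ofReal (x / ((t+x)*(τ+x))) := by
        apply setLIntegral_mono (by fun_prop)
        intro x hx
        apply ENNReal.ofReal_le_ofReal
        rw [div_le_div_iff₀ (by positivity) (by nlinarith [hx.1, ht.1, hτ.1])]
        nlinarith [hx.1, hx.2, ht.1, ht.2, hτ.1, hτ.2, mul_pos ht.1 hτ.1]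
    _ ≤ ∫⁻ x in Ioo 0 a, ENNReal.ofReal (x / ((t+x)*(τ+x))) := by
        refine lintegral_mono' (Measure.restrict_mono (fun x hx => ?_) le_rfl) le_rfl
        exact ⟨by linarith [hx.1, ha], hx.2⟩

lemma kernel_lower_log (a : ℝ) (ha : 0 < a) (t τ : ℝ) (ht : t ∈ Ioo 0 a) (hτ : τ ∈ Ioo 0 a)
    (hsa : t + τ ≤ a) :
    ENNReal.ofReal (2⁻¹ * (Real.log (t+τ+a) - Real.log ((t+τ)+(t+τ)))) ≤
      ∫⁻ x in Ioo 0 a, ENNReal.ofReal (x / ((t+x)*(τ+x))) := by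
  set s := t + τ with hsdef
  have hspos : 0 < s := by have := ht.1; have := hτ.1; positivity
  calc ENNReal.ofReal (2⁻¹ * (Real.log (s+a) - Real.log (s+s)))
      = ENNReal.ofReal 2⁻¹ * ENNReal.ofReal (Real.log (s+a) - Real.log (s+s)) :=
        ENNReal.ofReal_mul (by norm_num)
    _ = ENNReal.ofReal 2⁻¹ * ∫⁻ x in Ioo s a, ENNReal.ofReal ((s+x)⁻¹) := by
        rw [eval_inv_integral s s a hspos hspos.le hsa]
    _ = ∫⁻ x in Ioo s a, ENNReal.ofReal 2⁻¹ * ENNReal.ofReal ((s+x)⁻¹) := by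
        rw [lintegral_const_mul _ (by fun_prop)]
    _ = ∫⁻ x in Ioo s a, ENNReal.ofReal (2⁻¹ * (s+x)⁻¹) := by
        apply lintegral_congr
        intro x
        rw [ENNReal.ofReal_mul (by norm_num)]
    _ ≤ ∫⁻ x in Ioo s a, ENNReal.ofReal (x / ((t+x)*(τ+x))) := by
        apply setLIntegral_mono (by fun_prop)
        intro x hx
        apply ENNReal.ofReal_le_ofReal
        have hxs : s < x := hx.1
        have h2 : 2⁻¹ * (s+x)⁻¹ = 1 / (2*(s+x)) := by
          rw [inv_eq_one_div, inv_eq_one_div]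
          field_simp
        rw [h2, div_le_div_iff₀ (by nlinarith) (by nlinarith [ht.1, hτ.1])]
        nlinarith [sq_nonneg (t - τ), ht.1, hτ.1]
    _ ≤ ∫⁻ x in Ioo 0 a, ENNReal.ofReal (x / ((t+x)*(τ+x))) := by
        refine lintegral_mono' (Measure.restrict_mono (fun x hx => ?_) le_rfl) le_rfl
        exact ⟨by linarith [hx.1, hspos], hx.2⟩

lemma real_lower (a : ℝ) (ha : 0 < a) : ∃ C : ℝ, 0 < C ∧ ∀ s : ℝ, 0 < s → s < 2*a →
    |Real.log s| + 1 ≤ C * (1/16) ∨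
    (s ≤ a ∧ |Real.log s| + 1 ≤ C * (2⁻¹ * (Real.log (s+a) - Real.log (s+s)))) := by
  set M : ℝ := max (Real.log (2/a)) 0 with hM
  set s₀ : ℝ := min (min 1 a) (Real.exp (-(2*M+2))) with hs₀
  have hs₀pos : 0 < s₀ := lt_min (lt_min one_pos ha) (Real.exp_pos _)
  have hs₀1 : s₀ ≤ 1 := le_trans (min_le_left _ _) (min_le_left _ _)
  set B : ℝ := max (-(Real.log s₀)) |Real.log (2*a)| with hB
  have hB0 : 0 ≤ B := le_trans (abs_nonneg _) (le_max_right _ _)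
  refine ⟨max 4 (16*(B+1)), lt_of_lt_of_le (by norm_num) (le_max_left _ _), fun s hs hs2 => ?_⟩
  rcases lt_or_ge s s₀ with hcase | hcase
  · right
    have hsa : s ≤ a := le_of_lt (lt_of_lt_of_le hcase (le_trans (min_le_left _ _) (min_le_right _ _)))
    refine ⟨hsa, ?_⟩
    have hs1 : s < 1 := lt_of_lt_of_le hcase hs₀1
    have hlneg : Real.log s < 0 := Real.log_neg hs hs1
    have habs : |Real.log s| = -(Real.log s) := abs_of_neg hlneg
    have hlogexp : Real.log s < -(2*M+2) := by
      have := Real.log_lt_log hs (lt_of_lt_of_le hcase (min_le_right _ _))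
      rwa [Real.log_exp] at this
    have hkey : Real.log (s+a) - Real.log (s+s) ≥ -(Real.log s) - M := by
      have h1 : Real.log a ≤ Real.log (s+a) := Real.log_le_log ha (by linarith)
      have h2 : Real.log (s+s) = Real.log 2 + Real.log s := by
        rw [show s+s = 2*s by ring, Real.log_mul two_ne_zero hs.ne']
      have h3 : Real.log (2/a) = Real.log 2 - Real.log a := Real.log_div two_ne_zero ha.ne'
      have h4 : Real.log (2/a) ≤ M := le_max_left _ _
      linarith
    have hMnn : 0 ≤ M := le_max_right _ _
    have hC : (4:ℝ) ≤ max 4 (16*(B+1)) := le_max_left _ _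
    have hbr : 0 ≤ 2⁻¹ * (Real.log (s+a) - Real.log (s+s)) := by nlinarith
    nlinarith
  · left
    have habsB : |Real.log s| ≤ B := by
      rcases le_or_gt s 1 with h1 | h1
      · have : Real.log s ≤ 0 := Real.log_nonpos hs.le h1
        rw [abs_of_nonpos this]
        have := Real.log_le_log hs₀pos hcase
        exact le_trans (by linarith) (le_max_left _ _)
      · have h0 : 0 ≤ Real.log s := Real.log_nonneg h1.le
        rw [abs_of_nonneg h0]
        have h2 : Real.log s ≤ Real.log (2*a) := Real.log_le_log hs (by linarith)
        exact le_trans (le_trans h2 (le_abs_self _)) (le_max_right _ _)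
    have hC : (16*(B+1):ℝ) ≤ max 4 (16*(B+1)) := le_max_right _ _
    nlinarith

lemma kernel_two_sided (a : ℝ) (ha : 0 < a) : ∃ C : ℝ, 0 < C ∧ ∀ t τ : ℝ,
    t ∈ Ioo 0 a → τ ∈ Ioo 0 a →
    (∫⁻ x in Ioo 0 a, ENNReal.ofReal (x / ((t+x)*(τ+x))) ≤
       ENNReal.ofReal C * (ENNReal.ofReal |Real.log (t+τ)| + 1)) ∧
    (ENNReal.ofReal |Real.log (t+τ)| + 1 ≤
       ENNReal.ofReal C * ∫⁻ x in Ioo 0 a, ENNReal.ofReal (x / ((t+x)*(τ+x)))) := by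
  obtain ⟨C₀, hC₀, hlow⟩ := real_lower a ha
  refine ⟨max (|Real.log (3*a)| + 1) C₀, lt_of_lt_of_le hC₀ (le_max_right _ _), fun t τ ht hτ => ?_⟩
  set s := t + τ with hsdef
  have hspos : 0 < s := by have := ht.1; have := hτ.1; positivity
  have hs2a : s < 2*a := by have := ht.2; have := hτ.2; simp only [hsdef]; linarith
  have hone : ENNReal.ofReal |Real.log s| + 1 = ENNReal.ofReal (|Real.log s| + 1) := by
    rw [ENNReal.ofReal_add (abs_nonneg _) zero_le_one, ENNReal.ofReal_one]
  constructor
  · calc ∫⁻ x in Ioo 0 a, ENNReal.ofReal (x / ((t+x)*(τ+x)))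
        ≤ ENNReal.ofReal (Real.log (s+a) - Real.log s) := kernel_upper a ha t τ ht hτ
      _ ≤ ENNReal.ofReal ((|Real.log (3*a)| + 1) * (|Real.log s| + 1)) := by
          apply ENNReal.ofReal_le_ofReal
          have h1 : Real.log (s+a) ≤ Real.log (3*a) :=
            Real.log_le_log (by linarith) (by linarith)
          have h2 : Real.log (3*a) ≤ |Real.log (3*a)| := le_abs_self _
          have h3 : -Real.log s ≤ |Real.log s| := neg_le_abs _
          nlinarith [abs_nonneg (Real.log s), abs_nonneg (Real.log (3*a))]
      _ = ENNReal.ofReal (|Real.log (3*a)| + 1) * ENNReal.ofReal (|Real.log s| + 1) :=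
          ENNReal.ofReal_mul (by positivity)
      _ ≤ ENNReal.ofReal (max (|Real.log (3*a)| + 1) C₀) * (ENNReal.ofReal |Real.log s| + 1) := by
          rw [hone]
          exact mul_le_mul_left (ENNReal.ofReal_le_ofReal (le_max_left _ _)) _
  · rw [hone]
    rcases hlow s hspos hs2a with h | ⟨hsa, h⟩
    · calc ENNReal.ofReal (|Real.log s| + 1)
          ≤ ENNReal.ofReal (C₀ * (1/16)) := ENNReal.ofReal_le_ofReal h
        _ = ENNReal.ofReal C₀ * ENNReal.ofReal (1/16) := ENNReal.ofReal_mul hC₀.le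
        _ ≤ ENNReal.ofReal (max (|Real.log (3*a)| + 1) C₀) *
              ∫⁻ x in Ioo 0 a, ENNReal.ofReal (x / ((t+x)*(τ+x))) :=
            mul_le_mul (ENNReal.ofReal_le_ofReal (le_max_right _ _))
              (kernel_lower_const a ha t τ ht hτ) zero_le zero_le
    · calc ENNReal.ofReal (|Real.log s| + 1)
          ≤ ENNReal.ofReal (C₀ * (2⁻¹ * (Real.log (s+a) - Real.log (s+s)))) :=
            ENNReal.ofReal_le_ofReal h
        _ = ENNReal.ofReal C₀ * ENNReal.ofReal (2⁻¹ * (Real.log (s+a) - Real.log (s+s))) :=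
            ENNReal.ofReal_mul hC₀.le
        _ ≤ ENNReal.ofReal (max (|Real.log (3*a)| + 1) C₀) *
              ∫⁻ x in Ioo 0 a, ENNReal.ofReal (x / ((t+x)*(τ+x))) :=
            mul_le_mul (ENNReal.ofReal_le_ofReal (le_max_right _ _))
              (kernel_lower_log a ha t τ ht hτ hsa) zero_le zero_le

lemma side_lemma (F : ℝ → ℝ≥0∞) (hF : Measurable F) (T : Set ℝ) (hT : MeasurableSet T)
    (w : ℝ → ℝ) (hw : Measurable w) (hw0 : ∀ t ∈ T, 0 < w t)
    (hker : ∀ t ∈ T, ∀ τ ∈ T, |t + τ - 1| = w t + w τ)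
    (hinf : ∫⁻ t in T, F t = ∞) :
    ∫⁻ t in T, ∫⁻ τ in T, F t * F τ * ENNReal.ofReal |t + τ - 1| = ∞ := by
  have hFw : Measurable fun t => F t * ENNReal.ofReal (w t) := by fun_prop
  have hterm1 : ∫⁻ t in T, ∫⁻ τ in T, F t * F τ * ENNReal.ofReal (w t) = ∞ := by
    have hinner : ∀ t, ∫⁻ τ in T, F t * F τ * ENNReal.ofReal (w t) =
        (F t * ENNReal.ofReal (w t)) * ∫⁻ τ in T, F τ := by
      intro t
      rw [← lintegral_const_mul _ hF]
      congr 1; ext τ; ring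
    simp only [hinner, hinf]
    rw [lintegral_mul_const _ hFw]
    have hne : ∫⁻ t in T, F t * ENNReal.ofReal (w t) ≠ 0 := by
      intro h0
      have h1 := (lintegral_eq_zero_iff hFw).mp h0
      have h2 : F =ᵐ[volume.restrict T] 0 := by
        filter_upwards [ae_restrict_mem hT, h1] with t htT ht0
        have hwpos : ENNReal.ofReal (w t) ≠ 0 := (ENNReal.ofReal_pos.mpr (hw0 t htT)).ne'
        simpa [hwpos] using ht0
      rw [lintegral_congr_ae h2] at hinf
      simp at hinf
    exact ENNReal.mul_top hne
  rw [eq_top_iff, ← hterm1]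
  apply lintegral_mono_ae
  filter_upwards [ae_restrict_mem hT] with t htT
  apply setLIntegral_mono (by fun_prop)
  intro τ hτT
  apply mul_le_mul_right
  apply ENNReal.ofReal_le_ofReal
  rw [hker t htT τ hτT]
  linarith [(hw0 τ hτT).le]

lemma abs_log_lb (a s : ℝ) (ha : 0 < a) (hs : 0 < s) (hs2 : s < 2*a) :
    (max 1 (2*a))⁻¹ * |s - 1| ≤ |Real.log s| := by
  set k : ℝ := (max 1 (2*a))⁻¹ with hk
  have hmax1 : (1:ℝ) ≤ max 1 (2*a) := le_max_left _ _
  have hmaxpos : (0:ℝ) < max 1 (2*a) := by linarith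
  have hk1 : k ≤ 1 := by rw [hk]; exact inv_le_one_of_one_le₀ hmax1
  have hkpos : 0 < k := by positivity
  rcases le_or_gt s 1 with h1 | h1
  · have hlog : Real.log s ≤ s - 1 := Real.log_le_sub_one_of_pos hs
    have habs : |Real.log s| = -Real.log s := abs_of_nonpos (Real.log_nonpos hs.le h1)
    have habs2 : |s - 1| = 1 - s := by rw [abs_of_nonpos (by linarith)]; ring
    rw [habs, habs2]
    nlinarith
  · have hlog : Real.log s⁻¹ ≤ s⁻¹ - 1 := Real.log_le_sub_one_of_pos (by positivity)
    rw [Real.log_inv] at hlog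
    have hls : (s-1)/s ≤ Real.log s := by
      have : s⁻¹ - 1 = -((s-1)/s) := by field_simp; ring
      rw [this] at hlog
      linarith
    have habs : |Real.log s| = Real.log s := abs_of_nonneg (Real.log_nonneg h1.le)
    have habs2 : |s - 1| = s - 1 := abs_of_nonneg (by linarith)
    rw [habs, habs2]
    have hsk : k * s ≤ 1 := by
      rw [hk, inv_mul_le_iff₀ hmaxpos]
      have : s ≤ max 1 (2*a) := le_trans hs2.le (le_max_right _ _)
      linarith
    have h2 : k ≤ s⁻¹ := by nlinarith [mul_inv_cancel₀ hs.ne', inv_pos.mpr hs]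
    calc k * (s - 1) ≤ s⁻¹ * (s - 1) := by nlinarith
      _ = (s-1)/s := by rw [div_eq_mul_inv]; ring
      _ ≤ Real.log s := hls

lemma hard_lemma (a : ℝ) (ha : 0 < a) (F : ℝ → ℝ≥0∞) (hF : Measurable F)
    (hinf : ∫⁻ t in Ioo 0 a, F t = ∞) :
    ∫⁻ t in Ioo 0 a, ∫⁻ τ in Ioo 0 a, F t * F τ * ENNReal.ofReal |Real.log (t + τ)| = ∞ := by
  set S : Set ℝ := Ioo 0 a with hS
  set k : ℝ := (max 1 (2*a))⁻¹ with hk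
  have hkpos : 0 < k := by
    rw [hk]; apply inv_pos.mpr; exact lt_of_lt_of_le one_pos (le_max_left _ _)
  have hFF : Measurable fun p : ℝ × ℝ => F p.1 * F p.2 :=
    (hF.comp measurable_fst).mul (hF.comp measurable_snd)
  have habsm : Measurable fun p : ℝ × ℝ => ENNReal.ofReal |p.1 + p.2 - 1| :=
    ENNReal.measurable_ofReal.comp ((measurable_fst.add measurable_snd).sub measurable_const).abs
  have hlogm : Measurable fun p : ℝ × ℝ => ENNReal.ofReal |Real.log (p.1 + p.2)| :=
    ENNReal.measurable_ofReal.comp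
      ((Real.measurable_log.comp (measurable_fst.add measurable_snd)).abs)
  have hprod1 : Measurable (Function.uncurry fun t τ =>
      F t * F τ * ENNReal.ofReal |t + τ - 1|) := hFF.mul habsm
  have hprod2 : Measurable (Function.uncurry fun t τ =>
      F t * F τ * ENNReal.ofReal |Real.log (t + τ)|) := hFF.mul hlogm
  -- step 1: reduce to kernel |t+τ-1|
  suffices hQ : ∫⁻ t in S, ∫⁻ τ in S, F t * F τ * ENNReal.ofReal |t + τ - 1| = ∞ by
    have hpull : ∫⁻ t in S, ∫⁻ τ in S, F t * F τ *
          (ENNReal.ofReal k * ENNReal.ofReal |t + τ - 1|) =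
        ENNReal.ofReal k * ∫⁻ t in S, ∫⁻ τ in S, F t * F τ * ENNReal.ofReal |t + τ - 1| := by
      rw [← lintegral_const_mul _ (hprod1.lintegral_prod_right)]
      apply lintegral_congr; intro t
      rw [← lintegral_const_mul _ (by fun_prop : Measurable fun τ =>
        F t * F τ * ENNReal.ofReal |t + τ - 1|)]
      apply lintegral_congr; intro τ
      ring
    rw [eq_top_iff]
    calc (⊤:ℝ≥0∞) = ENNReal.ofReal k * ∫⁻ t in S, ∫⁻ τ in S,
          F t * F τ * ENNReal.ofReal |t + τ - 1| := by
          rw [hQ, ENNReal.mul_top (ENNReal.ofReal_pos.mpr hkpos).ne']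
      _ = ∫⁻ t in S, ∫⁻ τ in S, F t * F τ *
            (ENNReal.ofReal k * ENNReal.ofReal |t + τ - 1|) := hpull.symm
      _ ≤ ∫⁻ t in S, ∫⁻ τ in S, F t * F τ * ENNReal.ofReal |Real.log (t + τ)| := by
          apply setLIntegral_mono hprod2.lintegral_prod_right
          intro t ht
          apply setLIntegral_mono hprod2.of_uncurry_left
          intro τ hτ
          apply mul_le_mul_right
          rw [← ENNReal.ofReal_mul hkpos.le]
          apply ENNReal.ofReal_le_ofReal
          exact abs_log_lb a (t+τ) ha (by nlinarith [ht.1, hτ.1]) (by nlinarith [ht.2, hτ.2])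
  -- step 2: split S at 1/2
  set A : Set ℝ := S ∩ Iio (1/2) with hA
  set B : Set ℝ := S ∩ Ioi (1/2) with hB
  have hAm : MeasurableSet A := measurableSet_Ioo.inter measurableSet_Iio
  have hBm : MeasurableSet B := measurableSet_Ioo.inter measurableSet_Ioi
  have hAS : A ⊆ S := inter_subset_left
  have hBS : B ⊆ S := inter_subset_left
  have hdisj : Disjoint A B := by
    apply disjoint_left.mpr
    intro x hxA hxB
    exact absurd (mem_Iio.mp hxA.2) (not_lt.mpr hxB.2.le)
  have hsplit : ∫⁻ t in A, F t = ∞ ∨ ∫⁻ t in B, F t = ∞ := by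
    by_contra hcon
    push_neg at hcon
    have hle : ∫⁻ t in S, F t ≤ ((∫⁻ t in A, F t) + ∫⁻ t in B, F t) + 0 := by
      calc ∫⁻ t in S, F t ≤ ∫⁻ t in (A ∪ B) ∪ {1/2}, F t := by
            refine lintegral_mono' (Measure.restrict_mono (fun x hx => ?_) le_rfl) le_rfl
            rcases lt_trichotomy x (1/2) with h | h | h
            · exact Or.inl (Or.inl ⟨hx, h⟩)
            · exact Or.inr h
            · exact Or.inl (Or.inr ⟨hx, h⟩)
        _ ≤ (∫⁻ t in A ∪ B, F t) + ∫⁻ t in ({1/2} : Set ℝ), F t := lintegral_union_le _ _ _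
        _ = ((∫⁻ t in A, F t) + ∫⁻ t in B, F t) + ∫⁻ t in ({1/2} : Set ℝ), F t := by
            rw [lintegral_union hBm hdisj]
        _ = ((∫⁻ t in A, F t) + ∫⁻ t in B, F t) + 0 := by
            rw [setLIntegral_measure_zero _ _ (measure_singleton _)]
    rw [hinf, add_zero] at hle
    exact absurd (top_le_iff.mp hle) (ENNReal.add_ne_top.mpr ⟨hcon.1, hcon.2⟩)
  have hmono : ∀ T : Set ℝ, T ⊆ S →
      ∫⁻ t in T, ∫⁻ τ in T, F t * F τ * ENNReal.ofReal |t + τ - 1| ≤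
      ∫⁻ t in S, ∫⁻ τ in S, F t * F τ * ENNReal.ofReal |t + τ - 1| := by
    intro T hTS
    calc ∫⁻ t in T, ∫⁻ τ in T, F t * F τ * ENNReal.ofReal |t + τ - 1|
        ≤ ∫⁻ t in T, ∫⁻ τ in S, F t * F τ * ENNReal.ofReal |t + τ - 1| :=
          lintegral_mono fun t => lintegral_mono' (Measure.restrict_mono hTS le_rfl) le_rfl
      _ ≤ ∫⁻ t in S, ∫⁻ τ in S, F t * F τ * ENNReal.ofReal |t + τ - 1| :=
          lintegral_mono' (Measure.restrict_mono hTS le_rfl) le_rfl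
  rcases hsplit with hAinf | hBinf
  · have := side_lemma F hF A hAm (fun t => 1/2 - t) (by fun_prop)
      (fun t ht => sub_pos.mpr (mem_Iio.mp ht.2))
      (fun t ht τ hτ => by
        have h1 : t + τ - 1 < 0 := by
          have h2 := mem_Iio.mp ht.2; have h3 := mem_Iio.mp hτ.2; linarith
        rw [abs_of_neg h1]; ring) hAinf
    exact top_le_iff.mp (this ▸ hmono A hAS)
  · have := side_lemma F hF B hBm (fun t => t - 1/2) (by fun_prop)
      (fun t ht => sub_pos.mpr (mem_Ioi.mp ht.2))
      (fun t ht τ hτ => by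
        have h1 : 0 < t + τ - 1 := by
          have h2 := mem_Ioi.mp ht.2; have h3 := mem_Ioi.mp hτ.2; linarith
        rw [abs_of_pos h1]; ring) hBinf
    exact top_le_iff.mp (this ▸ hmono B hBS)

lemma swap3 (S : Set ℝ) (H : ℝ → ℝ → ℝ → ℝ≥0∞)
    (hH : Measurable fun q : (ℝ × ℝ) × ℝ => H q.1.1 q.1.2 q.2) :
    ∫⁻ x in S, ∫⁻ t in S, ∫⁻ τ in S, H t τ x =
    ∫⁻ t in S, ∫⁻ τ in S, ∫⁻ x in S, H t τ x := by
  have h1 : Measurable (Function.uncurry fun x t => ∫⁻ τ in S, H t τ x) := by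
    apply Measurable.lintegral_prod_right (f := fun p : ℝ × ℝ => fun τ => H p.2 τ p.1)
    exact hH.comp (((measurable_fst.snd).prodMk measurable_snd).prodMk measurable_fst.fst)
  rw [lintegral_lintegral_swap h1.aemeasurable]
  apply lintegral_congr
  intro t
  have h2 : Measurable (Function.uncurry fun x τ => H t τ x) :=
    hH.comp ((( measurable_const).prodMk measurable_snd).prodMk measurable_fst)
  exact lintegral_lintegral_swap h2.aemeasurable

lemma lhs_eq (a : ℝ) (ha : 0 < a) (ν : ℝ → ℝ) (hν_meas : Measurable ν)
    (hν_nonneg : ∀ t ∈ Ioo 0 a, 0 ≤ ν t) :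
    (∫⁻ x in Ioo 0 a,
        (∫⁻ t in Ioo 0 a, ENNReal.ofReal (ν t / (Real.sqrt t * (t + x)))) ^ 2 *
          ENNReal.ofReal x) =
    ∫⁻ t in Ioo 0 a, ∫⁻ τ in Ioo 0 a,
      (ENNReal.ofReal (ν t / Real.sqrt t) * ENNReal.ofReal (ν τ / Real.sqrt τ)) *
        ∫⁻ x in Ioo 0 a, ENNReal.ofReal (x / ((t+x)*(τ+x))) := by
  have hSm : MeasurableSet (Ioo (0:ℝ) a) := measurableSet_Ioo
  have hFmeas : Measurable fun t => ENNReal.ofReal (ν t / Real.sqrt t) :=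
    ENNReal.measurable_ofReal.comp (hν_meas.div Real.continuous_sqrt.measurable)
  have hGmeas : Measurable (Function.uncurry fun t x =>
      ENNReal.ofReal (ν t / Real.sqrt t) * ENNReal.ofReal ((t+x)⁻¹)) := by
    exact (hFmeas.comp measurable_fst).mul
      (ENNReal.measurable_ofReal.comp ((measurable_fst.add measurable_snd).inv))
  -- step 1: split the inner ofReal
  have step1 : ∀ x : ℝ, (∫⁻ t in Ioo 0 a, ENNReal.ofReal (ν t / (Real.sqrt t * (t + x)))) =
      ∫⁻ t in Ioo 0 a, ENNReal.ofReal (ν t / Real.sqrt t) * ENNReal.ofReal ((t+x)⁻¹) := by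
    intro x
    apply setLIntegral_congr_fun hSm
    intro t ht
    have h1 : ν t / (Real.sqrt t * (t+x)) = (ν t / Real.sqrt t) * (t+x)⁻¹ := by
      rw [div_mul_eq_div_div, div_eq_mul_inv]
    dsimp only
    rw [h1, ENNReal.ofReal_mul (div_nonneg (hν_nonneg t ht) (Real.sqrt_nonneg t))]
  simp only [step1]
  -- step 2: expand the square into a double integral
  have step2 : ∀ x : ℝ,
      (∫⁻ t in Ioo 0 a, ENNReal.ofReal (ν t / Real.sqrt t) * ENNReal.ofReal ((t+x)⁻¹)) ^ 2 *
        ENNReal.ofReal x =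
      ∫⁻ t in Ioo 0 a, ∫⁻ τ in Ioo 0 a,
        (ENNReal.ofReal (ν t / Real.sqrt t) * ENNReal.ofReal ((t+x)⁻¹)) *
        (ENNReal.ofReal (ν τ / Real.sqrt τ) * ENNReal.ofReal ((τ+x)⁻¹)) * ENNReal.ofReal x := by
    intro x
    have hmt : Measurable fun t =>
        ENNReal.ofReal (ν t / Real.sqrt t) * ENNReal.ofReal ((t+x)⁻¹) :=
      hGmeas.of_uncurry_right
    rw [sq, mul_assoc, ← lintegral_mul_const _ hmt]
    apply lintegral_congr
    intro t
    rw [← lintegral_mul_const _ hmt, ← lintegral_const_mul _ (hmt.mul_const _)]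
    apply lintegral_congr
    intro τ
    ring
  simp only [step2]
  -- step 3: swap integrals
  have hHmeas : Measurable fun q : (ℝ × ℝ) × ℝ =>
      (ENNReal.ofReal (ν q.1.1 / Real.sqrt q.1.1) * ENNReal.ofReal ((q.1.1+q.2)⁻¹)) *
      (ENNReal.ofReal (ν q.1.2 / Real.sqrt q.1.2) * ENNReal.ofReal ((q.1.2+q.2)⁻¹)) *
      ENNReal.ofReal q.2 := by
    exact (((hFmeas.comp measurable_fst.fst).mul (ENNReal.measurable_ofReal.comp
        ((measurable_fst.fst.add measurable_snd).inv))).mul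
      ((hFmeas.comp measurable_fst.snd).mul (ENNReal.measurable_ofReal.comp
        ((measurable_fst.snd.add measurable_snd).inv)))).mul
      (ENNReal.measurable_ofReal.comp measurable_snd)
  rw [swap3 (Ioo 0 a) (fun t τ x =>
      (ENNReal.ofReal (ν t / Real.sqrt t) * ENNReal.ofReal ((t+x)⁻¹)) *
      (ENNReal.ofReal (ν τ / Real.sqrt τ) * ENNReal.ofReal ((τ+x)⁻¹)) * ENNReal.ofReal x) hHmeas]
  -- step 4: evaluate the inner integral in x
  apply setLIntegral_congr_fun hSm
  intro t ht
  apply setLIntegral_congr_fun hSm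
  intro τ hτ
  have hmx : Measurable fun x : ℝ =>
      ENNReal.ofReal ((t+x)⁻¹) * ENNReal.ofReal ((τ+x)⁻¹) * ENNReal.ofReal x := by
    exact ((ENNReal.measurable_ofReal.comp ((measurable_const.add measurable_id).inv)).mul
      (ENNReal.measurable_ofReal.comp ((measurable_const.add measurable_id).inv))).mul
      ENNReal.measurable_ofReal
  calc ∫⁻ x in Ioo 0 a,
        (ENNReal.ofReal (ν t / Real.sqrt t) * ENNReal.ofReal ((t+x)⁻¹)) *
        (ENNReal.ofReal (ν τ / Real.sqrt τ) * ENNReal.ofReal ((τ+x)⁻¹)) * ENNReal.ofReal x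
      = ∫⁻ x in Ioo 0 a,
          (ENNReal.ofReal (ν t / Real.sqrt t) * ENNReal.ofReal (ν τ / Real.sqrt τ)) *
          (ENNReal.ofReal ((t+x)⁻¹) * ENNReal.ofReal ((τ+x)⁻¹) * ENNReal.ofReal x) := by
        apply lintegral_congr; intro x; ring
    _ = (ENNReal.ofReal (ν t / Real.sqrt t) * ENNReal.ofReal (ν τ / Real.sqrt τ)) *
          ∫⁻ x in Ioo 0 a,
            ENNReal.ofReal ((t+x)⁻¹) * ENNReal.ofReal ((τ+x)⁻¹) * ENNReal.ofReal x := by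
        rw [lintegral_const_mul _ hmx]
    _ = (ENNReal.ofReal (ν t / Real.sqrt t) * ENNReal.ofReal (ν τ / Real.sqrt τ)) *
          ∫⁻ x in Ioo 0 a, ENNReal.ofReal (x / ((t+x)*(τ+x))) := by
        congr 1
        apply setLIntegral_congr_fun hSm
        intro x hx
        have h1 : (0:ℝ) ≤ (t+x)⁻¹ := by
          have := ht.1; have := hx.1; positivity
        have h2 : (0:ℝ) ≤ (τ+x)⁻¹ := by
          have := hτ.1; have := hx.1; positivity
        dsimp only
        rw [← ENNReal.ofReal_mul h1, ← ENNReal.ofReal_mul (by positivity)]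
        congr 1
        rw [div_eq_mul_inv, mul_inv]
        ring

lemma rhs_eq (a : ℝ) (ha : 0 < a) (ν : ℝ → ℝ) (hν_meas : Measurable ν)
    (hν_nonneg : ∀ t ∈ Ioo 0 a, 0 ≤ ν t) :
    (∫⁻ τ in Ioo 0 a, ∫⁻ t in Ioo 0 a,
        ENNReal.ofReal (ν t * ν τ * |Real.log (t + τ)| / Real.sqrt (t * τ))) =
    ∫⁻ t in Ioo 0 a, ∫⁻ τ in Ioo 0 a,
      (ENNReal.ofReal (ν t / Real.sqrt t) * ENNReal.ofReal (ν τ / Real.sqrt τ)) *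
        ENNReal.ofReal |Real.log (t + τ)| := by
  have hSm : MeasurableSet (Ioo (0:ℝ) a) := measurableSet_Ioo
  have step1 : (∫⁻ τ in Ioo 0 a, ∫⁻ t in Ioo 0 a,
      ENNReal.ofReal (ν t * ν τ * |Real.log (t + τ)| / Real.sqrt (t * τ))) =
      ∫⁻ τ in Ioo 0 a, ∫⁻ t in Ioo 0 a,
        (ENNReal.ofReal (ν t / Real.sqrt t) * ENNReal.ofReal (ν τ / Real.sqrt τ)) *
          ENNReal.ofReal |Real.log (t + τ)| := by
    apply setLIntegral_congr_fun hSm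
    intro τ hτ
    apply setLIntegral_congr_fun hSm
    intro t ht
    have hst : (0:ℝ) < Real.sqrt t := Real.sqrt_pos.mpr ht.1
    have hsτ : (0:ℝ) < Real.sqrt τ := Real.sqrt_pos.mpr hτ.1
    have h1 : ν t * ν τ * |Real.log (t + τ)| / Real.sqrt (t * τ) =
        (ν t / Real.sqrt t) * ((ν τ / Real.sqrt τ) * |Real.log (t + τ)|) := by
      rw [Real.sqrt_mul ht.1.le]
      field_simp
    dsimp only
    rw [h1, ENNReal.ofReal_mul (div_nonneg (hν_nonneg t ht) hst.le),
      ENNReal.ofReal_mul (div_nonneg (hν_nonneg τ hτ) hsτ.le), mul_assoc]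
  rw [step1]
  apply lintegral_congr
  intro τ
  apply lintegral_congr
  intro t
  rw [mul_comm (ENNReal.ofReal (ν t / Real.sqrt t)) (ENNReal.ofReal (ν τ / Real.sqrt τ)),
    add_comm t τ]

theorem stmt_10 (a : ℝ) (ha : 0 < a) (ν : ℝ → ℝ) (hν_meas : Measurable ν)
    (hν_nonneg : ∀ t ∈ Set.Ioo 0 a, 0 ≤ ν t) :
    (∫⁻ x in Set.Ioo 0 a,
        (∫⁻ t in Set.Ioo 0 a, ENNReal.ofReal (ν t / (Real.sqrt t * (t + x)))) ^ 2 *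
          ENNReal.ofReal x) < ⊤ ↔
    (∫⁻ τ in Set.Ioo 0 a, ∫⁻ t in Set.Ioo 0 a,
        ENNReal.ofReal (ν t * ν τ * |Real.log (t + τ)| / Real.sqrt (t * τ))) < ⊤ := by
  rw [lhs_eq a ha ν hν_meas hν_nonneg, rhs_eq a ha ν hν_meas hν_nonneg]
  set F : ℝ → ℝ≥0∞ := fun t => ENNReal.ofReal (ν t / Real.sqrt t) with hFdef
  have hFmeas : Measurable F :=
    ENNReal.measurable_ofReal.comp (hν_meas.div Real.continuous_sqrt.measurable)
  obtain ⟨C, hC, hker⟩ := kernel_two_sided a ha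
  set c : ℝ≥0∞ := ENNReal.ofReal C with hcdef
  have hcne : c ≠ ⊤ := ENNReal.ofReal_ne_top
  set S : Set ℝ := Ioo 0 a with hSdef
  -- measurability of the various double-integrands
  have hmFF : Measurable (Function.uncurry fun t τ : ℝ => F t * F τ) :=
    (hFmeas.comp measurable_fst).mul (hFmeas.comp measurable_snd)
  have hmL : Measurable (Function.uncurry fun t τ : ℝ => ENNReal.ofReal |Real.log (t + τ)|) :=
    ENNReal.measurable_ofReal.comp
      ((Real.measurable_log.comp (measurable_fst.add measurable_snd)).abs)
  have hmK : Measurable (Function.uncurry fun t τ : ℝ =>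
      ∫⁻ x in S, ENNReal.ofReal (x / ((t+x)*(τ+x)))) := by
    apply Measurable.lintegral_prod_right
      (f := fun (p : ℝ × ℝ) (x : ℝ) => ENNReal.ofReal (x / ((p.1+x)*(p.2+x))))
    exact ENNReal.measurable_ofReal.comp
      (measurable_snd.div ((measurable_fst.fst.add measurable_snd).mul
        (measurable_fst.snd.add measurable_snd)))
  have hmFL : Measurable (Function.uncurry fun t τ : ℝ =>
      (F t * F τ) * ENNReal.ofReal |Real.log (t+τ)|) := by exact hmFF.mul hmL
  have hmFK : Measurable (Function.uncurry fun t τ : ℝ =>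
      (F t * F τ) * ∫⁻ x in S, ENNReal.ofReal (x / ((t+x)*(τ+x)))) := by exact hmFF.mul hmK
  have hmFLc : Measurable (Function.uncurry fun t τ : ℝ =>
      c * ((F t * F τ) * ENNReal.ofReal |Real.log (t+τ)|)) := by exact hmFL.const_mul c
  have hmFFc : Measurable (Function.uncurry fun t τ : ℝ =>
      c * (F t * F τ)) := by exact hmFF.const_mul c
  set P : ℝ≥0∞ := ∫⁻ t in S, ∫⁻ τ in S,
    (F t * F τ) * ∫⁻ x in S, ENNReal.ofReal (x / ((t+x)*(τ+x))) with hPdef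
  set Q : ℝ≥0∞ := ∫⁻ t in S, ∫⁻ τ in S, (F t * F τ) * ENNReal.ofReal |Real.log (t + τ)|
    with hQdef
  set R : ℝ≥0∞ := ∫⁻ t in S, ∫⁻ τ in S, F t * F τ with hRdef
  -- R as a square
  have hR : R = (∫⁻ t in S, F t) ^ 2 := by
    rw [hRdef, sq]
    calc ∫⁻ t in S, ∫⁻ τ in S, F t * F τ = ∫⁻ t in S, F t * ∫⁻ τ in S, F τ := by
          apply lintegral_congr; intro t; rw [lintegral_const_mul _ hFmeas]
      _ = (∫⁻ t in S, F t) * ∫⁻ τ in S, F τ := lintegral_mul_const _ hFmeas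
  -- pulling constants out of double integrals
  have hpullP : (∫⁻ t in S, ∫⁻ τ in S,
      (F t * F τ) * (c * ∫⁻ x in S, ENNReal.ofReal (x / ((t+x)*(τ+x))))) = c * P := by
    calc (∫⁻ t in S, ∫⁻ τ in S,
        (F t * F τ) * (c * ∫⁻ x in S, ENNReal.ofReal (x / ((t+x)*(τ+x)))))
        = ∫⁻ t in S, ∫⁻ τ in S,
            c * ((F t * F τ) * ∫⁻ x in S, ENNReal.ofReal (x / ((t+x)*(τ+x)))) := by
          apply lintegral_congr; intro t; apply lintegral_congr; intro τ; ring
      _ = ∫⁻ t in S, c * ∫⁻ τ in S,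
            (F t * F τ) * ∫⁻ x in S, ENNReal.ofReal (x / ((t+x)*(τ+x))) :=
          lintegral_congr fun t => lintegral_const_mul _ hmFK.of_uncurry_left
      _ = c * P := lintegral_const_mul _ hmFK.lintegral_prod_right
  -- P ≤ c * (Q + R)
  have hPle : P ≤ c * (Q + R) := by
    have hm1 : Measurable (Function.uncurry fun t τ : ℝ =>
        c * ((F t * F τ) * ENNReal.ofReal |Real.log (t+τ)|) + c * (F t * F τ)) := by
      exact hmFLc.add hmFFc
    have h1 : P ≤ ∫⁻ t in S, ∫⁻ τ in S,
        c * ((F t * F τ) * ENNReal.ofReal |Real.log (t+τ)|) + c * (F t * F τ) := by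
      rw [hPdef]
      apply setLIntegral_mono hm1.lintegral_prod_right
      intro t ht
      apply setLIntegral_mono hm1.of_uncurry_left
      intro τ hτ
      calc (F t * F τ) * ∫⁻ x in S, ENNReal.ofReal (x / ((t+x)*(τ+x)))
          ≤ (F t * F τ) * (c * (ENNReal.ofReal |Real.log (t+τ)| + 1)) :=
            mul_le_mul_right (hker t τ ht hτ).1 _
        _ = c * ((F t * F τ) * ENNReal.ofReal |Real.log (t+τ)|) + c * (F t * F τ) := by ring
    have h2 : (∫⁻ t in S, ∫⁻ τ in S,
        c * ((F t * F τ) * ENNReal.ofReal |Real.log (t+τ)|) + c * (F t * F τ)) = c * Q + c * R := by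
      calc (∫⁻ t in S, ∫⁻ τ in S,
          c * ((F t * F τ) * ENNReal.ofReal |Real.log (t+τ)|) + c * (F t * F τ))
          = ∫⁻ t in S, (∫⁻ τ in S, c * ((F t * F τ) * ENNReal.ofReal |Real.log (t+τ)|)) +
              ∫⁻ τ in S, c * (F t * F τ) :=
            lintegral_congr fun t =>
              lintegral_add_left hmFLc.of_uncurry_left _
        _ = (∫⁻ t in S, ∫⁻ τ in S, c * ((F t * F τ) * ENNReal.ofReal |Real.log (t+τ)|)) +
              ∫⁻ t in S, ∫⁻ τ in S, c * (F t * F τ) :=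
            lintegral_add_left hmFLc.lintegral_prod_right _
        _ = c * Q + c * R := by
            congr 1
            · calc (∫⁻ t in S, ∫⁻ τ in S, c * ((F t * F τ) * ENNReal.ofReal |Real.log (t+τ)|))
                  = ∫⁻ t in S, c * ∫⁻ τ in S, (F t * F τ) * ENNReal.ofReal |Real.log (t+τ)| :=
                    lintegral_congr fun t =>
                      lintegral_const_mul _ hmFL.of_uncurry_left
                _ = c * Q := lintegral_const_mul _ hmFL.lintegral_prod_right
            · calc (∫⁻ t in S, ∫⁻ τ in S, c * (F t * F τ))
                  = ∫⁻ t in S, c * ∫⁻ τ in S, F t * F τ :=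
                    lintegral_congr fun t => lintegral_const_mul _ hmFF.of_uncurry_left
                _ = c * R := lintegral_const_mul _ hmFF.lintegral_prod_right
    calc P ≤ c * Q + c * R := h2 ▸ h1
      _ = c * (Q + R) := (mul_add c Q R).symm
  -- Q ≤ c * P and R ≤ c * P
  have hmid : Measurable (Function.uncurry fun t τ : ℝ =>
      (F t * F τ) * (c * ∫⁻ x in S, ENNReal.ofReal (x / ((t+x)*(τ+x))))) := by
    exact hmFF.mul (hmK.const_mul c)
  have hQle : Q ≤ c * P := by
    rw [← hpullP, hQdef]
    apply setLIntegral_mono hmid.lintegral_prod_right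
    intro t ht
    apply setLIntegral_mono hmid.of_uncurry_left
    intro τ hτ
    exact mul_le_mul_right (le_trans le_self_add (hker t τ ht hτ).2) _
  have hRle : R ≤ c * P := by
    rw [← hpullP, hRdef]
    apply setLIntegral_mono hmid.lintegral_prod_right
    intro t ht
    apply setLIntegral_mono hmid.of_uncurry_left
    intro τ hτ
    calc F t * F τ = (F t * F τ) * 1 := (mul_one _).symm
      _ ≤ (F t * F τ) * (c * ∫⁻ x in S, ENNReal.ofReal (x / ((t+x)*(τ+x)))) :=
        mul_le_mul_right (le_trans le_add_self (hker t τ ht hτ).2) _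
  constructor
  · intro hP
    exact lt_of_le_of_lt hQle (ENNReal.mul_lt_top (lt_top_iff_ne_top.mpr hcne) hP)
  · intro hQ
    have hFfin : (∫⁻ t in S, F t) ≠ ⊤ := fun htop => hQ.ne (hard_lemma a ha F hFmeas htop)
    have hRfin : R < ⊤ := by
      rw [hR, sq]
      exact ENNReal.mul_lt_top (lt_top_iff_ne_top.mpr hFfin) (lt_top_iff_ne_top.mpr hFfin)
    exact lt_of_le_of_lt hPle (ENNReal.mul_lt_top (lt_top_iff_ne_top.mpr hcne)
      (ENNReal.add_lt_top.mpr ⟨hQ, hRfin⟩))
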